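/- If the susceptible populations are proportional to the class distribution, S_{r,p}(t) = c(t)·N f_{r,p} with c(t) ∈ (0,1], then multiplying the infected equation I'_{r,p} = σ(Σ_{r',p'} r' I_{r',p'})·r S_{r,p}/(N E[r]) − γ I_{r,p} by r and summing over all classes yields Ĩ'(t) = γ(R(t) − 1)Ĩ(t) with R(t) = (σ c(t)/γ)·E[r²]/E[r], where Ĩ(t) = Σ_{r,p} r I_{r,p}(t). -/

import Mathlib

open Finset

/-- Edge-perspective reduction: if `S_{r,p}(t) = c(t) N f_{r,p}`, then the number of
infected edges `Ĩ(t) = Σ r I_{r,p}(t)` satisfies `Ĩ' = γ (R(t) − 1) Ĩ` with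
`R(t) = (σ c(t)/γ) E[r²]/E[r]`. -/
theorem edge_perspective_reduction
    {ι : Type*} [Fintype ι] [Nonempty ι]
    (r f : ι → ℝ) (σ γ N : ℝ) (hσ : 0 < σ) (hγ : 0 < γ) (hN : 0 < N)
    (hr : ∀ i, 0 < r i) (hf : ∀ i, 0 < f i)
    (c : ℝ → ℝ) (hc : ∀ t, 0 < c t ∧ c t ≤ 1)
    (I : ι → ℝ → ℝ)
    (hI : ∀ i, ∀ t : ℝ, HasDerivAt (I i)
      (σ * (∑ j, r j * I j t) * (r i * (c t * N * f i)) / (N * ∑ j, r j * f j)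
        - γ * I i t) t) :
    ∀ t : ℝ, HasDerivAt (fun s => ∑ i, r i * I i s)
      (γ * ((σ * c t / γ) * (∑ i, r i ^ 2 * f i) / (∑ i, r i * f i) - 1) *
        (∑ i, r i * I i t)) t := by
  intro t
  have hE : (0:ℝ) < ∑ j, r j * f j :=
    Finset.sum_pos (fun j _ => mul_pos (hr j) (hf j)) (univ_nonempty)
  have hsum : HasDerivAt (fun s => ∑ i, r i * I i s)
      (∑ i, r i * (σ * (∑ j, r j * I j t) * (r i * (c t * N * f i)) / (N * ∑ j, r j * f j)
        - γ * I i t)) t := by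
    apply HasDerivAt.fun_sum
    intro i _
    exact (hI i t).const_mul (r i)
  convert hsum using 1
  have hEne : (∑ j, r j * f j) ≠ 0 := ne_of_gt hE
  have hNne : N ≠ 0 := ne_of_gt hN
  have hγne : γ ≠ 0 := ne_of_gt hγ
  rw [Finset.sum_congr rfl (fun i _ => by
    field_simp : ∀ i ∈ univ, r i * (σ * (∑ j, r j * I j t) * (r i * (c t * N * f i)) / (N * ∑ j, r j * f j)
        - γ * I i t) = σ * (∑ j, r j * I j t) * c t * (r i ^ 2 * f i) / (∑ j, r j * f j) - γ * (r i * I i t))]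
  rw [Finset.sum_sub_distrib, ← Finset.sum_div, ← Finset.mul_sum, ← Finset.mul_sum]
  field_simp
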